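/- For the sequence α₁ = 1/L, α_{k+1} = 1/(2L) + √(1/(4L²) + α_k²), one has the bounds (k+1)/(2L) ≤ α_k ≤ k/L for all k ≥ 1; in particular A_N = L α_N² ≥ (N+1)²/(4L). -/

import Mathlib

open Finset

/-- Growth bounds (k+1)/(2L) ≤ α_k ≤ k/L for the fast-gradient step sizes;
in particular A_N = L α_N² ≥ (N+1)²/(4L). -/
theorem stmt13 (L : ℝ) (hL : 0 < L) (α : ℕ → ℝ)
    (hα1 : α 1 = 1 / L)
    (hαrec : ∀ k, 1 ≤ k →
      α (k + 1) = 1 / (2 * L) + Real.sqrt (1 / (4 * L ^ 2) + (α k) ^ 2)) :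
    (∀ k : ℕ, 1 ≤ k → ((k : ℝ) + 1) / (2 * L) ≤ α k ∧ α k ≤ (k : ℝ) / L) ∧
      (∀ N : ℕ, 1 ≤ N → ((N : ℝ) + 1) ^ 2 / (4 * L) ≤ L * (α N) ^ 2) := by
  have hL2 : (0:ℝ) < 2 * L := by linarith
  have main : ∀ k : ℕ, 1 ≤ k → ((k : ℝ) + 1) / (2 * L) ≤ α k ∧ α k ≤ (k : ℝ) / L := by
    intro k hk
    induction k with
    | zero => omega
    | succ n ih =>
      rcases Nat.eq_or_lt_of_le hk with h1 | h1
      · -- n + 1 = 1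
        have hn : n = 0 := by omega
        subst hn
        rw [hα1]
        constructor
        · rw [div_le_div_iff₀ hL2 hL]; push_cast; nlinarith
        · push_cast; simp
      · have hn1 : 1 ≤ n := by omega
        obtain ⟨hlo, hhi⟩ := ih hn1
        have hαpos : 0 < α n := lt_of_lt_of_le (by positivity) hlo
        have hrec := hαrec n hn1
        have hsq : (0:ℝ) ≤ 1 / (4 * L ^ 2) + (α n) ^ 2 := by positivity
        constructor
        · -- lower: sqrt ≥ α n
          have h1 : α n ≤ Real.sqrt (1 / (4 * L ^ 2) + (α n) ^ 2) :=
            Real.le_sqrt' hαpos |>.mpr (by linarith [show (0:ℝ) ≤ 1/(4*L^2) by positivity])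
          rw [hrec]
          have : ((n:ℝ) + 1 + 1) / (2 * L) = 1 / (2 * L) + ((n:ℝ)+1)/(2*L) := by
            field_simp; ring
          push_cast
          rw [this]
          linarith
        · -- upper: sqrt ≤ 1/(2L) + α n
          have h2 : Real.sqrt (1 / (4 * L ^ 2) + (α n) ^ 2) ≤ 1/(2*L) + α n := by
            rw [show (1:ℝ)/(2*L) + α n = Real.sqrt ((1/(2*L) + α n)^2) from
              (Real.sqrt_sq (by positivity)).symm]
            apply Real.sqrt_le_sqrt
            have heq : (1/(2*L)+α n)^2 = 1/(4*L^2) + α n / L + α n^2 := by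
              field_simp; ring
            have hnn : (0:ℝ) ≤ α n / L := by positivity
            linarith [heq.ge, heq.le]
          rw [hrec]
          push_cast
          have h3 : (1:ℝ)/(2*L) + 1/(2*L) = 1/L := by field_simp; norm_num
          have h4 : ((n:ℝ)+1)/L = 1/L + (n:ℝ)/L := by field_simp; ring
          rw [h4]
          linarith
  refine ⟨main, fun N hN => ?_⟩
  obtain ⟨hlo, _⟩ := main N hN
  have hpos : (0:ℝ) ≤ ((N:ℝ)+1)/(2*L) := by positivity
  have h := mul_self_le_mul_self hpos hlo
  have : (((N:ℝ)+1)/(2*L)) * (((N:ℝ)+1)/(2*L)) = ((N:ℝ)+1)^2/(4*L^2) := by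
    field_simp; ring
  have e : L * (((N:ℝ)+1)^2/(4*L^2)) = ((N:ℝ)+1)^2/(4*L) := by field_simp
  calc ((N:ℝ)+1)^2/(4*L) = L * (((N:ℝ)+1)^2/(4*L^2)) := e.symm
    _ ≤ L * (α N * α N) := by
        apply mul_le_mul_of_nonneg_left _ hL.le
        rw [← this]; exact h
    _ = L * (α N)^2 := by ring
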